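/- Let G be a generalized Big Match game satisfying the stated assumptions, let T, i ≥ 1 be integers and 0 < ξ < 1, and let σ ∈ A2^T be an arbitrary prefix of a pure Markov strategy for Player 2. Consider the first T rounds where Player 1 follows τ1^{i,ξ} and Player 2 follows σ. Let S ∈ {1,…,T} ∪ {∞} be the round in which the game stops (∞ if it does not stop in the first T rounds), and let U be the outcome π(R,σ_S) if the game stops within the first T rounds and 0 otherwise. Then: (1) −E[U | U<0]·Pr[U<0] ≤ ξ³(1−ξ)^{i−K+1} + (1−ξ)^{1−2K}·E[U | U>0]·Pr[U>0]; (2) if gdens(σ^T) ≤ −i·2K/T then Pr[S < ∞] ≥ ξ⁴·ω, where ω = min_{a2} ω(R,a2). -/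

import Mathlib

open Filter

noncomputable section

namespace Paper

/-! ### Generalized Big Match games -/

/-- A generalized Big Match game: Player 1 has the two actions `L` and `R`,
Player 2 has the actions `Fin (n+1)`; `payL a` and `payR a` are the stage
payoffs `π(L,a)` and `π(R,a)`; when Player 1 plays `R` against `a`, the game
stops with probability `stopR a > 0` (the game never stops when Player 1
plays `L`). -/
structure GBM (n : ℕ) where
  payL : Fin (n + 1) → ℝ
  payR : Fin (n + 1) → ℝ
  stopR : Fin (n + 1) → ℝ
  stopR_pos : ∀ a, 0 < stopR a
  stopR_le_one : ∀ a, stopR a ≤ 1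

variable {n : ℕ}

/-- The `R`-row of the derived matrix game `G̃`: `G̃(R,a) = ω(R,a)·π(R,a)`.
(The `L`-row is `G̃(L,a) = π(L,a) = payL a`.) -/
def GBM.rowR (G : GBM n) (a : Fin (n + 1)) : ℝ := G.stopR a * G.payR a

/-- The value (in mixed strategies) of the derived matrix game `G̃`, where `p`
is the probability with which Player 1 plays the row `L`. -/
def matVal (G : GBM n) : ℝ :=
  ⨆ p : Set.Icc (0 : ℝ) 1, ⨅ a : Fin (n + 1),
    ((p : ℝ) * G.payL a + (1 - (p : ℝ)) * G.rowR a)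

/-- All entries of the derived matrix game `G̃` are integers. -/
def GBM.IntEntries (G : GBM n) : Prop :=
  ∀ a, (∃ z : ℤ, G.payL a = (z : ℝ)) ∧ (∃ z : ℤ, G.rowR a = (z : ℝ))

/-- Player 1 has no pure optimal strategy in the derived matrix game `G̃`:
each of the two rows has an entry strictly below the value. -/
def GBM.NoPureOptimal (G : GBM n) : Prop :=
  (∃ a, G.payL a < matVal G) ∧ (∃ a, G.rowR a < matVal G)

/-- `K`, the maximum magnitude of an entry of the derived matrix game `G̃`. -/
def gbmK (G : GBM n) : ℝ :=
  Finset.univ.sup' Finset.univ_nonempty fun a : Fin (n + 1) =>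
    max |G.payL a| |G.rowR a|

/-- `ω`, the minimum (nonzero) stopping probability of `G`. -/
def gbmOmega (G : GBM n) : ℝ := Finset.univ.inf' Finset.univ_nonempty G.stopR

/-- The generalized density of the length-`T` prefix of the pure Markov
strategy `σ` of Player 2: `gdens(σ^T) = (1/T) ∑_{i<T} π(L, σ_i)`. -/
def gdens (G : GBM n) (σ : ℕ → Fin (n + 1)) (T : ℕ) : ℝ :=
  (∑ t ∈ Finset.range T, G.payL (σ t)) / T

/-- The counter used as memory by the base strategy `τ1^{i,ξ}` at round `t`,
against the fixed sequence `σ` of actions of Player 2: after Player 2 plays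
`a`, the counter is updated by `j ↦ j - G̃(R,a)`. -/
def tauCounter (G : GBM n) (σ : ℕ → Fin (n + 1)) (t : ℕ) : ℝ :=
  -∑ s ∈ Finset.range t, G.rowR (σ s)

/-- The probability with which the base strategy `τ1^{i,ξ}` plays `R` at round
`t`: if the counter equals `j`, this is `ξ⁴ (1-ξ)^(i+j)` when `i + j > 0` and
`ξ⁴` when `i + j ≤ 0`. -/
def tauRProb (G : GBM n) (ξ : ℝ) (i : ℕ) (σ : ℕ → Fin (n + 1)) (t : ℕ) : ℝ :=
  if 0 < (i : ℝ) + tauCounter G σ t then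
    ξ ^ 4 * (1 - ξ) ^ ((i : ℝ) + tauCounter G σ t)
  else ξ ^ 4

/-- The probability that the game stops at round `t` given that it has not
stopped earlier: Player 1 plays `R` and the stopping lottery succeeds. -/
def tauStopProb (G : GBM n) (ξ : ℝ) (i : ℕ) (σ : ℕ → Fin (n + 1)) (t : ℕ) : ℝ :=
  tauRProb G ξ i σ t * G.stopR (σ t)

/-- The (unconditional) probability that the game stops exactly at round `t`. -/
def tauPStop (G : GBM n) (ξ : ℝ) (i : ℕ) (σ : ℕ → Fin (n + 1)) (t : ℕ) : ℝ :=
  tauStopProb G ξ i σ t * ∏ s ∈ Finset.range t, (1 - tauStopProb G ξ i σ s)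

/-! ### Auxiliary lemmas -/

lemma geom_sum_xi {ξ : ℝ} (m : ℕ) :
    1 - (1 - ξ) ^ m = ξ * ∑ j ∈ Finset.range m, (1 - ξ) ^ j := by
  have h := geom_sum_mul (x := (1 - ξ)) m
  linear_combination h

lemma geom_bounds {ξ : ℝ} (hξ0 : 0 < ξ) (hξ1 : ξ < 1) {m : ℕ} (hm : 1 ≤ m) :
    (m : ℝ) * ξ * (1 - ξ) ^ (m - 1) ≤ 1 - (1 - ξ) ^ m ∧ 1 - (1 - ξ) ^ m ≤ m * ξ := by
  have hb0 : (0:ℝ) ≤ 1 - ξ := by linarith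
  have hb1 : (1:ℝ) - ξ ≤ 1 := by linarith
  have hgs := geom_sum_xi (ξ := ξ) m
  have hlow : (m : ℝ) * (1-ξ) ^ (m - 1) ≤ ∑ j ∈ Finset.range m, (1-ξ) ^ j := by
    have h : ∀ j ∈ Finset.range m, (1-ξ) ^ (m - 1) ≤ (1-ξ) ^ j := by
      intro j hj
      rw [Finset.mem_range] at hj
      exact pow_le_pow_of_le_one hb0 hb1 (by omega)
    calc (m : ℝ) * (1-ξ) ^ (m - 1) = ∑ _j ∈ Finset.range m, (1-ξ) ^ (m - 1) := by
          simp [mul_comm]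
      _ ≤ _ := Finset.sum_le_sum h
  have hhigh : ∑ j ∈ Finset.range m, (1-ξ) ^ j ≤ (m : ℝ) := by
    calc ∑ j ∈ Finset.range m, (1-ξ) ^ j ≤ ∑ _j ∈ Finset.range m, (1:ℝ) :=
          Finset.sum_le_sum (fun j _ => pow_le_one₀ hb0 hb1)
      _ = m := by simp
  constructor
  · rw [hgs]; nlinarith
  · rw [hgs]; nlinarith

/-- The potential function used in the telescoping argument. -/
def Phi (ξ : ℝ) (k : ℕ) (x : ℤ) : ℝ :=
  (1 - ξ) ^ x.toNat + ξ * (1 - ξ) ^ (k - 1) * ((-x).toNat : ℝ)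

lemma Phi_nonneg {ξ : ℝ} (hξ0 : 0 < ξ) (hξ1 : ξ < 1) (k : ℕ) (x : ℤ) :
    0 ≤ Phi ξ k x := by
  have hb0 : (0:ℝ) ≤ 1 - ξ := by linarith
  have h1 := pow_nonneg hb0 x.toNat
  have h2 := pow_nonneg hb0 (k-1)
  have h3 : (0:ℝ) ≤ ((-x).toNat : ℝ) := by positivity
  unfold Phi; positivity

lemma phi_diff_lower {ξ : ℝ} (hξ0 : 0 < ξ) (hξ1 : ξ < 1) {k m : ℕ} (hm : 1 ≤ m)
    (hmk : m ≤ k) (x : ℤ) :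
    ξ * (1-ξ)^(k-1) * (1-ξ)^x.toNat * m ≤ Phi ξ k x - Phi ξ k (x + m) := by
  have hb0 : (0:ℝ) ≤ 1 - ξ := by linarith
  have hb1 : (1:ℝ) - ξ ≤ 1 := by linarith
  rcases le_or_gt 0 x with hx | hx
  · have h1 : (x + m).toNat = x.toNat + m := by omega
    have h2 : (-x).toNat = 0 := by omega
    have h3 : (-(x + m)).toNat = 0 := by omega
    have hg := (geom_bounds hξ0 hξ1 hm).1
    have hmono : (1-ξ)^(k-1) ≤ (1-ξ)^(m-1) := pow_le_pow_of_le_one hb0 hb1 (by omega)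
    have hpa : (0:ℝ) ≤ (1-ξ)^x.toNat := pow_nonneg hb0 _
    simp only [Phi, h1, h2, h3, Nat.cast_zero, mul_zero, add_zero, pow_add]
    nlinarith [mul_le_mul_of_nonneg_left hg hpa,
      mul_le_mul_of_nonneg_right hmono
        (by positivity : (0:ℝ) ≤ ξ * (1-ξ)^x.toNat * m)]
  rcases le_or_gt (x + m) 0 with hxm | hxm
  · have h1 : x.toNat = 0 := by omega
    have h2 : (x + m).toNat = 0 := by omega
    have h3 : (((-x).toNat : ℕ) : ℝ) = -(x : ℝ) := by
      have hz : ((-x).toNat : ℤ) = -x := by omega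
      exact_mod_cast hz
    have h4 : (((-(x + m)).toNat : ℕ) : ℝ) = -(x:ℝ) - m := by
      have hz : ((-(x + m)).toNat : ℤ) = -x - m := by omega
      exact_mod_cast hz
    simp only [Phi, h1, h2, h3, h4, pow_zero]
    ring_nf
    nlinarith [sq_nonneg ξ]
  · have h1 : x.toNat = 0 := by omega
    set a := (x + m).toNat with ha
    have ha1 : 1 ≤ a := by omega
    have ham : a ≤ m := by omega
    have h3 : (((-x).toNat : ℕ) : ℝ) = (m : ℝ) - a := by
      have hz : ((-x).toNat : ℤ) = m - a := by omega
      exact_mod_cast hz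
    have h4 : (-(x + m)).toNat = 0 := by omega
    have hg := (geom_bounds hξ0 hξ1 ha1).1
    have hmono : (1-ξ)^(k-1) ≤ (1-ξ)^(a-1) := pow_le_pow_of_le_one hb0 hb1 (by omega)
    simp only [Phi, h1, h4, Nat.cast_zero, mul_zero, add_zero, pow_zero, h3]
    nlinarith [mul_le_mul_of_nonneg_right hmono
      (by positivity : (0:ℝ) ≤ (a:ℝ) * ξ)]

lemma phi_diff_upper {ξ : ℝ} (hξ0 : 0 < ξ) (hξ1 : ξ < 1) {k m : ℕ} (hm : 1 ≤ m)
    (hmk : m ≤ k) (x : ℤ) :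
    Phi ξ k (x - m) - Phi ξ k x ≤ ξ * (1-ξ)^x.toNat * m / (1-ξ)^k := by
  have hb0 : (0:ℝ) < 1 - ξ := by linarith
  have hb1 : (1:ℝ) - ξ ≤ 1 := by linarith
  rw [le_div_iff₀ (pow_pos hb0 k)]
  rcases le_or_gt (m : ℤ) x with hx | hx
  · have h1 : x.toNat = (x - m).toNat + m := by omega
    have h2 : (-x).toNat = 0 := by omega
    have h3 : (-(x - m)).toNat = 0 := by omega
    have hg := (geom_bounds hξ0 hξ1 hm).2
    have hmono : (1-ξ)^k ≤ (1-ξ)^m := pow_le_pow_of_le_one hb0.le hb1 hmk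
    have hpa : (0:ℝ) ≤ (1-ξ)^(x - m).toNat := pow_nonneg hb0.le _
    simp only [Phi, h1, h2, h3, Nat.cast_zero, mul_zero, add_zero, pow_add]
    nlinarith [mul_le_mul_of_nonneg_right (mul_le_mul_of_nonneg_left hg hpa)
        (pow_nonneg hb0.le k),
      mul_le_mul_of_nonneg_right hmono
        (by positivity : (0:ℝ) ≤ (1-ξ)^(x-m).toNat * m * ξ)]
  rcases le_or_gt x 0 with hx0 | hx0
  · have h1 : x.toNat = 0 := by omega
    have h2 : (x - m).toNat = 0 := by omega
    have h3 : (((-x).toNat : ℕ) : ℝ) = -(x : ℝ) := by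
      have hz : ((-x).toNat : ℤ) = -x := by omega
      exact_mod_cast hz
    have h4 : (((-(x - m)).toNat : ℕ) : ℝ) = (m:ℝ) - x := by
      have hz : ((-(x - m)).toNat : ℤ) = m - x := by omega
      exact_mod_cast hz
    have hkk : (1-ξ)^(k-1) * (1-ξ)^k ≤ 1 := by
      calc (1-ξ)^(k-1) * (1-ξ)^k = (1-ξ)^(k-1+k) := by rw [pow_add]
        _ ≤ 1 := pow_le_one₀ hb0.le hb1
    simp only [Phi, h1, h2, h3, h4, pow_zero]
    nlinarith [mul_le_mul_of_nonneg_right hkk (by positivity : (0:ℝ) ≤ ξ * m)]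
  · have h3 : (-x).toNat = 0 := by omega
    have h2 : (x - m).toNat = 0 := by omega
    set a := x.toNat with ha
    have ha1 : 1 ≤ a := by omega
    have ham : a ≤ m := by omega
    have hak : a ≤ k := by omega
    have h4 : (((-(x - m)).toNat : ℕ) : ℝ) = (m : ℝ) - a := by
      have hz : ((-(x - m)).toNat : ℤ) = m - a := by omega
      exact_mod_cast hz
    have hma : (0:ℝ) ≤ (m:ℝ) - a := by
      have : (a:ℝ) ≤ m := by exact_mod_cast ham
      linarith
    have hg := (geom_bounds hξ0 hξ1 ha1).2
    have hka : (1-ξ)^k ≤ (1-ξ)^a := pow_le_pow_of_le_one hb0.le hb1 hak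
    have hk2a : (1-ξ)^(k-1) * (1-ξ)^k ≤ (1-ξ)^a := by
      calc (1-ξ)^(k-1) * (1-ξ)^k = (1-ξ)^(k-1+k) := by rw [pow_add]
        _ ≤ (1-ξ)^a := pow_le_pow_of_le_one hb0.le hb1 (by omega)
    simp only [Phi, h2, h3, h4, Nat.cast_zero, mul_zero, add_zero, pow_zero]
    nlinarith [mul_le_mul_of_nonneg_right hg (pow_nonneg hb0.le k),
      mul_le_mul_of_nonneg_right hka (by positivity : (0:ℝ) ≤ (a:ℝ) * ξ),
      mul_le_mul_of_nonneg_right hk2a (mul_nonneg hξ0.le hma)]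

lemma abel_bound (w F : ℕ → ℝ) (hw0 : ∀ t, 0 ≤ w t) (hwa : ∀ t, w (t+1) ≤ w t)
    (hF : ∀ t, 0 ≤ F t) (T : ℕ) :
    ∑ t ∈ Finset.range T, w t * (F t - F (t+1)) ≤ w 0 * F 0 := by
  calc ∑ t ∈ Finset.range T, w t * (F t - F (t+1))
      ≤ ∑ t ∈ Finset.range T, (w t * F t - w (t+1) * F (t+1)) := by
        refine Finset.sum_le_sum fun t _ => ?_
        nlinarith [mul_le_mul_of_nonneg_right (hwa t) (hF (t+1))]
    _ = w 0 * F 0 - w T * F T := Finset.sum_range_sub' (fun t => w t * F t) T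
    _ ≤ w 0 * F 0 := by nlinarith [mul_nonneg (hw0 T) (hF T)]

lemma part1_abstract (ξ : ℝ) (hξ0 : 0 < ξ) (hξ1 : ξ < 1) (k : ℕ) (hk1 : 1 ≤ k)
    (i T : ℕ) (hi : 1 ≤ i) (g : ℕ → ℤ) (hgk : ∀ t, (g t).natAbs ≤ k)
    (x : ℕ → ℤ) (hx0 : x 0 = i) (hxs : ∀ t, x (t + 1) = x t - g t)
    (w : ℕ → ℝ) (hw0 : ∀ t, 0 ≤ w t) (hwa : ∀ t, w (t + 1) ≤ w t) (hw1 : w 0 = 1) :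
    -(∑ t ∈ (Finset.range T).filter (fun t => g t < 0),
        w t * (ξ ^ 4 * (1 - ξ) ^ (x t).toNat) * (g t : ℝ)) ≤
      ξ ^ 3 * (1 - ξ) * (1 - ξ) ^ i / (1 - ξ) ^ k +
        (1 - ξ) / (1 - ξ) ^ (2 * k) *
          ∑ t ∈ (Finset.range T).filter (fun t => 0 < g t),
            w t * (ξ ^ 4 * (1 - ξ) ^ (x t).toNat) * (g t : ℝ) := by
  classical
  have hb0 : (0:ℝ) < 1 - ξ := by linarith
  have hbne : ((1:ℝ) - ξ) ^ k ≠ 0 := by positivity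
  have hbk : (1-ξ)^k = (1-ξ)^(k-1) * (1-ξ) := by
    rw [← pow_succ]; congr 1; omega
  have h2k : (1-ξ)^(2*k) = (1-ξ)^k * (1-ξ)^k := by rw [two_mul, pow_add]
  set F : ℕ → ℝ := fun t => Phi ξ k (x t) with hF
  set C1 : ℝ := ξ^3 * (1-ξ) / (1-ξ)^k with hC1
  have hC1pos : 0 ≤ C1 := by rw [hC1]; positivity
  have hA : ∀ t, g t < 0 →
      -(w t * (ξ ^ 4 * (1 - ξ) ^ (x t).toNat) * (g t : ℝ)) ≤
        C1 * (w t * (F t - F (t+1))) := by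
    intro t hgt
    set m : ℕ := (-(g t)).toNat with hm
    have hm1 : 1 ≤ m := by omega
    have hmk : m ≤ k := by have := hgk t; omega
    have hmz : ((m : ℤ) : ℝ) = -((g t : ℤ) : ℝ) := by
      have : (m : ℤ) = -(g t) := by omega
      exact_mod_cast this
    have hx1 : x (t+1) = x t + (m:ℤ) := by rw [hxs]; omega
    have hd := phi_diff_lower hξ0 hξ1 hm1 hmk (x t)
    have h2 := mul_le_mul_of_nonneg_left hd (mul_nonneg (hw0 t) hC1pos)
    calc -(w t * (ξ ^ 4 * (1 - ξ) ^ (x t).toNat) * (g t : ℝ))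
        = (w t * C1) * (ξ * (1-ξ)^(k-1) * (1-ξ)^((x t).toNat) * m) := by
          push_cast at hmz
          rw [hC1, hbk, hmz]
          have hne1 : ((1:ℝ)-ξ)^(k-1) ≠ 0 := by positivity
          have hne2 : ((1:ℝ)-ξ) ≠ 0 := by positivity
          field_simp
      _ ≤ (w t * C1) * (Phi ξ k (x t) - Phi ξ k (x t + (m:ℤ))) := h2
      _ = C1 * (w t * (F t - F (t+1))) := by rw [hF]; simp only; rw [hx1]; ring
  have hB : ∀ t, 0 < g t →
      C1 * (w t * (F (t+1) - F t)) ≤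
        (1 - ξ) / (1 - ξ) ^ (2 * k) *
          (w t * (ξ ^ 4 * (1 - ξ) ^ (x t).toNat) * (g t : ℝ)) := by
    intro t hgt
    set m : ℕ := (g t).toNat with hm
    have hm1 : 1 ≤ m := by omega
    have hmk : m ≤ k := by have := hgk t; omega
    have hmz : ((m : ℤ) : ℝ) = ((g t : ℤ) : ℝ) := by
      have : (m : ℤ) = g t := by omega
      exact_mod_cast this
    have hx1 : x (t+1) = x t - (m:ℤ) := by rw [hxs]; omega
    have hd := phi_diff_upper hξ0 hξ1 hm1 hmk (x t)
    have h2 := mul_le_mul_of_nonneg_left hd (mul_nonneg (hw0 t) hC1pos)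
    calc C1 * (w t * (F (t+1) - F t))
        = (w t * C1) * (Phi ξ k (x t - (m:ℤ)) - Phi ξ k (x t)) := by
          rw [hF]; simp only; rw [hx1]; ring
      _ ≤ (w t * C1) * (ξ * (1-ξ)^((x t).toNat) * m / (1-ξ)^k) := h2
      _ = (1 - ξ) / (1 - ξ) ^ (2 * k) *
          (w t * (ξ ^ 4 * (1 - ξ) ^ (x t).toNat) * (g t : ℝ)) := by
          push_cast at hmz
          rw [hC1, h2k, ← hmz]
          field_simp
  have hFnn : ∀ t, 0 ≤ F t := fun t => Phi_nonneg hξ0 hξ1 k (x t)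
  have habel := abel_bound w F hw0 hwa hFnn T
  have hF0 : F 0 = (1-ξ)^i := by
    rw [hF]; simp only; rw [hx0, Phi]
    have h1 : ((i:ℤ)).toNat = i := by omega
    have h2 : ((-(i:ℤ))).toNat = 0 := by omega
    rw [h1, h2]
    simp
  have hsplit : ∑ t ∈ Finset.range T, w t * (F t - F (t+1)) =
      (∑ t ∈ (Finset.range T).filter (fun t => g t < 0), w t * (F t - F (t+1))) +
        ∑ t ∈ (Finset.range T).filter (fun t => 0 < g t), w t * (F t - F (t+1)) := by
    rw [← Finset.sum_filter_add_sum_filter_not (Finset.range T) (fun t => g t < 0)]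
    congr 1
    apply (Finset.sum_subset ?_ ?_).symm
    · intro t ht
      simp only [Finset.mem_filter] at ht ⊢
      exact ⟨ht.1, by omega⟩
    · intro t ht hnt
      simp only [Finset.mem_filter] at ht
      have hg0 : g t = 0 := by
        by_contra h
        exact hnt (Finset.mem_filter.mpr ⟨ht.1, by omega⟩)
      have hFe : F (t+1) = F t := by
        rw [hF]; simp only; rw [hxs, hg0]; ring_nf
      rw [hFe]; ring
  calc -(∑ t ∈ (Finset.range T).filter (fun t => g t < 0),
        w t * (ξ ^ 4 * (1 - ξ) ^ (x t).toNat) * (g t : ℝ))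
      = ∑ t ∈ (Finset.range T).filter (fun t => g t < 0),
          -(w t * (ξ ^ 4 * (1 - ξ) ^ (x t).toNat) * (g t : ℝ)) := by
        rw [Finset.sum_neg_distrib]
    _ ≤ ∑ t ∈ (Finset.range T).filter (fun t => g t < 0),
          C1 * (w t * (F t - F (t+1))) :=
        Finset.sum_le_sum fun t ht => hA t (Finset.mem_filter.mp ht).2
    _ = C1 * ∑ t ∈ (Finset.range T).filter (fun t => g t < 0),
          w t * (F t - F (t+1)) := (Finset.mul_sum _ _ _).symm
    _ = C1 * (∑ t ∈ Finset.range T, w t * (F t - F (t+1))) +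
          ∑ t ∈ (Finset.range T).filter (fun t => 0 < g t),
            C1 * (w t * (F (t+1) - F t)) := by
        have hrw : ∑ t ∈ (Finset.range T).filter (fun t => 0 < g t),
            C1 * (w t * (F (t+1) - F t)) =
            -(C1 * ∑ t ∈ (Finset.range T).filter (fun t => 0 < g t),
              w t * (F t - F (t+1))) := by
          rw [Finset.mul_sum, ← Finset.sum_neg_distrib]
          exact Finset.sum_congr rfl fun t _ => by ring
        rw [hrw, hsplit]
        ring
    _ ≤ C1 * (w 0 * F 0) +
          ∑ t ∈ (Finset.range T).filter (fun t => 0 < g t),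
            (1 - ξ) / (1 - ξ) ^ (2 * k) *
              (w t * (ξ ^ 4 * (1 - ξ) ^ (x t).toNat) * (g t : ℝ)) := by
        refine add_le_add (mul_le_mul_of_nonneg_left habel hC1pos)
          (Finset.sum_le_sum fun t ht => hB t (Finset.mem_filter.mp ht).2)
    _ = ξ ^ 3 * (1 - ξ) * (1 - ξ) ^ i / (1 - ξ) ^ k +
        (1 - ξ) / (1 - ξ) ^ (2 * k) *
          ∑ t ∈ (Finset.range T).filter (fun t => 0 < g t),
            w t * (ξ ^ 4 * (1 - ξ) ^ (x t).toNat) * (g t : ℝ) := by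
        rw [hw1, one_mul, hF0, ← Finset.mul_sum, hC1]
        ring

lemma exists_optimal (G : GBM n) (hVal : matVal G = 0) :
    ∃ p : ℝ, 0 ≤ p ∧ p ≤ 1 ∧ ∀ a, 0 ≤ p * G.payL a + (1 - p) * G.rowR a := by
  set f : ℝ → ℝ := fun p => ⨅ a : Fin (n+1), (p * G.payL a + (1 - p) * G.rowR a) with hf
  have hfc : Continuous f := by
    have he : f = fun p => Finset.univ.inf' Finset.univ_nonempty
        (fun a : Fin (n+1) => p * G.payL a + (1 - p) * G.rowR a) := by
      funext p; rw [Finset.inf'_univ_eq_ciInf]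
    rw [he]
    apply Continuous.finset_inf'_apply
    intro a _
    fun_prop
  obtain ⟨p₀, hp₀mem, hmax⟩ :=
    isCompact_Icc.exists_isMaxOn (Set.nonempty_Icc.mpr zero_le_one) hfc.continuousOn
  have hval' : matVal G = f p₀ := by
    have hrfl : matVal G = ⨆ p : Set.Icc (0:ℝ) 1, f (p : ℝ) := rfl
    rw [hrfl]
    apply le_antisymm
    · exact ciSup_le fun q => hmax q.2
    · exact le_ciSup ⟨f p₀, by rintro y ⟨q, rfl⟩; exact hmax q.2⟩
        (⟨p₀, hp₀mem⟩ : Set.Icc (0:ℝ) 1)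
  refine ⟨p₀, hp₀mem.1, hp₀mem.2, fun a => ?_⟩
  have h := ciInf_le (Finite.bddBelow_range
    (fun a : Fin (n+1) => p₀ * G.payL a + (1 - p₀) * G.rowR a)) a
  calc (0:ℝ) = f p₀ := by rw [← hVal, hval']
    _ ≤ _ := h

/-- properties of the base strategy `τ1^{i,ξ}`.  Let `G` be
a generalized Big Match game whose derived matrix game has integer entries,
value `0` and no pure optimal strategy for Player 1, with `K` the maximum
magnitude of an entry.  Let `T, i ≥ 1`, `0 < ξ < 1`, and let `σ` be an
arbitrary length-`T` prefix of a pure Markov strategy of Player 2.  With `U`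
the outcome if the game stops within the first `T` rounds (and `0` otherwise):
(1) `-E[U | U<0]·Pr[U<0] ≤ ξ³(1-ξ)^{i-K+1} + (1-ξ)^{1-2K}·E[U | U>0]·Pr[U>0]`;
(2) if `gdens(σ^T) ≤ -i·2K/T` then `Pr[S < ∞] ≥ ξ⁴·ω`. -/

theorem stmt17 (n : ℕ) (G : GBM n) (hInt : G.IntEntries) (hVal : matVal G = 0)
    (hPure : G.NoPureOptimal) (K : ℤ) (hK : (K : ℝ) = gbmK G)
    (T i : ℕ) (hT : 1 ≤ T) (hi : 1 ≤ i) (ξ : ℝ) (hξ0 : 0 < ξ) (hξ1 : ξ < 1)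
    (σ : ℕ → Fin (n + 1)) :
    (-(∑ t ∈ (Finset.range T).filter (fun t => G.payR (σ t) < 0),
          tauPStop G ξ i σ t * G.payR (σ t)) ≤
        ξ ^ 3 * (1 - ξ) ^ ((i : ℤ) - K + 1) +
          (1 - ξ) ^ ((1 : ℤ) - 2 * K) *
            ∑ t ∈ (Finset.range T).filter (fun t => 0 < G.payR (σ t)),
              tauPStop G ξ i σ t * G.payR (σ t)) ∧
    (gdens G σ T ≤ -(i : ℝ) * (2 * (K : ℝ)) / T →
      ξ ^ 4 * gbmOmega G ≤ 1 - ∏ t ∈ Finset.range T, (1 - tauStopProb G ξ i σ t)) := by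
  classical
  have hb0 : (0:ℝ) < 1 - ξ := by linarith
  choose zR hzR using fun a => (hInt a).2
  have hKL : ∀ a, |G.payL a| ≤ (K:ℝ) := by
    intro a
    rw [hK, gbmK]
    exact le_trans (le_max_left _ _)
      (Finset.le_sup' (fun a => max |G.payL a| |G.rowR a|) (Finset.mem_univ a))
  have hKR : ∀ a, |G.rowR a| ≤ (K:ℝ) := by
    intro a
    rw [hK, gbmK]
    exact le_trans (le_max_right _ _)
      (Finset.le_sup' (fun a => max |G.payL a| |G.rowR a|) (Finset.mem_univ a))
  obtain ⟨aL, haL⟩ := hPure.1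
  obtain ⟨aR, haR⟩ := hPure.2
  rw [hVal] at haL haR
  have hzRneg : zR aR ≤ -1 := by
    have h := hzR aR
    rw [h] at haR
    have h2 : zR aR < 0 := by exact_mod_cast haR
    omega
  have hK1 : 1 ≤ K := by
    have h := hKR aR
    rw [hzR aR] at h
    have h2 : |zR aR| ≤ K := by
      have h3 : ((|zR aR| : ℤ) : ℝ) ≤ (K:ℝ) := by rw [Int.cast_abs]; exact h
      exact_mod_cast h3
    rw [abs_of_nonpos (by omega)] at h2
    omega
  set k := K.toNat with hkdef
  have hkK : (k:ℤ) = K := by omega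
  have hk1 : 1 ≤ k := by omega
  have hzabs : ∀ a, (zR a).natAbs ≤ k := by
    intro a
    have h := hKR a
    rw [hzR a] at h
    have h2 : |zR a| ≤ K := by
      have h3 : ((|zR a| : ℤ) : ℝ) ≤ (K:ℝ) := by rw [Int.cast_abs]; exact h
      exact_mod_cast h3
    rw [Int.abs_eq_natAbs] at h2
    omega
  set x : ℕ → ℤ := fun t => (i:ℤ) - ∑ s ∈ Finset.range t, zR (σ s) with hxdef
  have hx0 : x 0 = i := by simp [hxdef]
  have hxs : ∀ t, x (t+1) = x t - zR (σ t) := by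
    intro t
    simp only [hxdef, Finset.sum_range_succ]
    ring
  have hxcast : ∀ t, ((x t : ℤ):ℝ) = (i:ℝ) + tauCounter G σ t := by
    intro t
    have hsum : ∑ s ∈ Finset.range t, ((zR (σ s) : ℤ):ℝ)
        = ∑ s ∈ Finset.range t, G.rowR (σ s) :=
      Finset.sum_congr rfl (fun s _ => (hzR (σ s)).symm)
    simp only [hxdef, tauCounter]
    push_cast
    rw [hsum]
    ring
  have hr : ∀ t, tauRProb G ξ i σ t = ξ^4 * (1-ξ)^((x t).toNat) := by
    intro t
    rw [tauRProb, ← hxcast t]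
    rcases le_or_gt (x t) 0 with h | h
    · rw [if_neg (by exact_mod_cast not_lt.mpr h),
        (show (x t).toNat = 0 by omega), pow_zero, mul_one]
    · rw [if_pos (by exact_mod_cast h), Real.rpow_intCast]
      congr 1
      rw [← Int.toNat_of_nonneg h.le, zpow_natCast, Int.toNat_of_nonneg h.le]
  have hrange : ∀ t, 0 ≤ tauStopProb G ξ i σ t ∧ tauStopProb G ξ i σ t ≤ 1 := by
    intro t
    have hB1 : (1-ξ)^((x t).toNat) ≤ 1 := pow_le_one₀ hb0.le (by linarith)
    have hB0 : (0:ℝ) ≤ (1-ξ)^((x t).toNat) := pow_nonneg hb0.le _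
    have hx4 : ξ^4 ≤ 1 := pow_le_one₀ hξ0.le hξ1.le
    have hx40 : (0:ℝ) ≤ ξ^4 := by positivity
    have hs0 := (G.stopR_pos (σ t)).le
    have hs1 := G.stopR_le_one (σ t)
    rw [tauStopProb, hr t]
    constructor
    · positivity
    · exact mul_le_one₀ (mul_le_one₀ hx4 hB0 hB1) hs0 hs1
  have hw0 : ∀ t, (0:ℝ) ≤ ∏ s ∈ Finset.range t, (1 - tauStopProb G ξ i σ s) :=
    fun t => Finset.prod_nonneg (fun s _ => by linarith [(hrange s).2])
  have hwa : ∀ t, ∏ s ∈ Finset.range (t+1), (1 - tauStopProb G ξ i σ s)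
      ≤ ∏ s ∈ Finset.range t, (1 - tauStopProb G ξ i σ s) := by
    intro t
    rw [Finset.prod_range_succ]
    have h1 : 1 - tauStopProb G ξ i σ t ≤ 1 := by linarith [(hrange t).1]
    nlinarith [hw0 t]
  have hrow : ∀ t, G.stopR (σ t) * G.payR (σ t) = ((zR (σ t) : ℤ):ℝ) := by
    intro t
    have h := hzR (σ t)
    rwa [GBM.rowR] at h
  constructor
  · -- part (1)
    have hmain := part1_abstract ξ hξ0 hξ1 k hk1 i T hi (fun t => zR (σ t))
      (fun t => hzabs (σ t)) x hx0 hxs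
      (fun t => ∏ s ∈ Finset.range t, (1 - tauStopProb G ξ i σ s))
      hw0 hwa (by simp)
    have hsummand : ∀ t, tauPStop G ξ i σ t * G.payR (σ t) =
        (∏ s ∈ Finset.range t, (1 - tauStopProb G ξ i σ s)) *
          (ξ^4 * (1-ξ)^((x t).toNat)) * ((zR (σ t) : ℤ):ℝ) := by
      intro t
      rw [tauPStop, tauStopProb, hr t, ← hrow t]
      ring
    have hsgn : ∀ t, (G.payR (σ t) < 0 ↔ zR (σ t) < 0) ∧
        (0 < G.payR (σ t) ↔ 0 < zR (σ t)) := by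
      intro t
      have hs := G.stopR_pos (σ t)
      have h := hrow t
      constructor
      · constructor
        · intro hlt
          have : ((zR (σ t) : ℤ):ℝ) < 0 := by nlinarith
          exact_mod_cast this
        · intro hlt
          have h2 : ((zR (σ t) : ℤ):ℝ) < 0 := by exact_mod_cast hlt
          nlinarith
      · constructor
        · intro hlt
          have : (0:ℝ) < ((zR (σ t) : ℤ):ℝ) := by nlinarith
          exact_mod_cast this
        · intro hlt
          have h2 : (0:ℝ) < ((zR (σ t) : ℤ):ℝ) := by exact_mod_cast hlt
          nlinarith
    have e1 : (Finset.range T).filter (fun t => G.payR (σ t) < 0) =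
        (Finset.range T).filter (fun t => zR (σ t) < 0) :=
      Finset.filter_congr (fun t _ => (hsgn t).1)
    have e2 : (Finset.range T).filter (fun t => 0 < G.payR (σ t)) =
        (Finset.range T).filter (fun t => 0 < zR (σ t)) :=
      Finset.filter_congr (fun t _ => (hsgn t).2)
    have hbne : ((1:ℝ) - ξ) ≠ 0 := by linarith
    have hcast1 : ξ^3 * (1-ξ) ^ ((i:ℤ) - K + 1) = ξ^3 * (1-ξ) * (1-ξ)^i / (1-ξ)^k := by
      rw [show ((i:ℤ) - K + 1) = ((i+1 : ℕ):ℤ) - (k:ℤ) by omega,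
        zpow_sub₀ hbne, zpow_natCast, zpow_natCast, pow_succ]
      ring
    have hcast2 : (1-ξ) ^ ((1:ℤ) - 2*K) = (1-ξ) / (1-ξ)^(2*k) := by
      rw [show ((1:ℤ) - 2*K) = ((1 : ℕ):ℤ) - ((2*k : ℕ):ℤ) by omega,
        zpow_sub₀ hbne, zpow_natCast, zpow_natCast, pow_one]
    rw [e1, e2, hcast1, hcast2,
      Finset.sum_congr rfl (fun t _ => hsummand t),
      Finset.sum_congr rfl (fun t _ => hsummand t)]
    exact hmain
  · -- part (2)
    intro hdens
    obtain ⟨p, hp0, hp1, hopt⟩ := exists_optimal G hVal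
    have hp1' : p < 1 := by
      rcases lt_or_eq_of_le hp1 with h | h
      · exact h
      · exfalso
        have h2 := hopt aL
        rw [← h] at h2
        simp at h2
        nlinarith
    have hRneg : G.rowR aR ≤ -1 := by
      rw [hzR aR]
      exact_mod_cast hzRneg
    have hpK : 1 - p ≤ p * K := by
      have h := hopt aR
      have hL : G.payL aR ≤ K := (abs_le.mp (hKL aR)).2
      nlinarith
    have hT0 : (0:ℝ) < T := by exact_mod_cast hT
    have hSfull : ∑ t ∈ Finset.range T, G.payL (σ t) ≤ -(i:ℝ) * (2*(K:ℝ)) := by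
      rw [gdens] at hdens
      have h2 := mul_le_mul_of_nonneg_right hdens hT0.le
      rw [div_mul_cancel₀ _ (ne_of_gt hT0), div_mul_cancel₀ _ (ne_of_gt hT0)] at h2
      exact h2
    set T' := T - 1 with hT'def
    have hTsplit : T = T' + 1 := by omega
    have hSL' : ∑ t ∈ Finset.range T', G.payL (σ t) ≤ -(i:ℝ)*(2*(K:ℝ)) + K := by
      have hlast : -(K:ℝ) ≤ G.payL (σ T') := (abs_le.mp (hKL (σ T'))).1
      have hsp : ∑ t ∈ Finset.range T, G.payL (σ t) =
          (∑ t ∈ Finset.range T', G.payL (σ t)) + G.payL (σ T') := by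
        conv_lhs => rw [hTsplit]
        rw [Finset.sum_range_succ]
      linarith
    have hsum0 : 0 ≤ p * (∑ t ∈ Finset.range T', G.payL (σ t)) +
        (1-p) * (∑ t ∈ Finset.range T', G.rowR (σ t)) := by
      rw [Finset.mul_sum, Finset.mul_sum, ← Finset.sum_add_distrib]
      exact Finset.sum_nonneg fun t _ => hopt (σ t)
    have hKpos : (1:ℝ) ≤ K := by exact_mod_cast hK1
    have hi1 : (1:ℝ) ≤ i := by exact_mod_cast hi
    have hSR : (i:ℝ) ≤ ∑ t ∈ Finset.range T', G.rowR (σ t) := by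
      set SL := ∑ t ∈ Finset.range T', G.payL (σ t) with hSL
      set SR := ∑ t ∈ Finset.range T', G.rowR (σ t) with hSRd
      have h1 : p * SL ≤ p * (-(i:ℝ)*(2*(K:ℝ)) + K) := mul_le_mul_of_nonneg_left hSL' hp0
      have h2 : (1-p) * (2*(i:ℝ)-1) ≤ p*(K:ℝ)*(2*(i:ℝ)-1) :=
        mul_le_mul_of_nonneg_right hpK (by linarith)
      have h3 : (1-p) * (i:ℝ) ≤ (1-p) * SR := by
        nlinarith [mul_nonneg (by linarith : (0:ℝ) ≤ 1 - p) (by linarith : (0:ℝ) ≤ (i:ℝ) - 1)]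
      exact (mul_le_mul_iff_right₀ (by linarith : (0:ℝ) < 1 - p)).mp h3
    have hxT' : x T' ≤ 0 := by
      have hcast : ((x T' : ℤ):ℝ) = (i:ℝ) - ∑ t ∈ Finset.range T', G.rowR (σ t) := by
        rw [hxcast T', tauCounter]
        ring
      have hle : ((x T' : ℤ):ℝ) ≤ 0 := by rw [hcast]; linarith
      exact_mod_cast hle
    have hstop : ξ^4 * gbmOmega G ≤ tauStopProb G ξ i σ T' := by
      rw [tauStopProb, hr T', (show (x T').toNat = 0 by omega), pow_zero, mul_one]
      have hω : gbmOmega G ≤ G.stopR (σ T') :=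
        Finset.inf'_le _ (Finset.mem_univ _)
      exact mul_le_mul_of_nonneg_left hω (by positivity)
    have hprod : ∏ t ∈ Finset.range T, (1 - tauStopProb G ξ i σ t) ≤
        1 - tauStopProb G ξ i σ T' := by
      conv_lhs => rw [hTsplit]
      rw [Finset.prod_range_succ]
      have h1 : ∏ t ∈ Finset.range T', (1 - tauStopProb G ξ i σ t) ≤ 1 :=
        Finset.prod_le_one (fun s _ => by linarith [(hrange s).2])
          (fun s _ => by linarith [(hrange s).1])
      exact mul_le_of_le_one_left (by linarith [(hrange T').2]) h1
    linarith


end Paper
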